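/- arXiv:1308.2088 — 5 statements merged into one kernel-verified Lean document; each statement's English description precedes it below -/
import Mathlib

section
/- Let p be a prime, n ≥ 1, and let b_1,...,b_n be integers each coprime to p. Define 𝔟 : {0,...,p^n−1} → ℤ by 𝔟(s) = Σ_{i=1}^n s_{(n−i)} p^{n−i} b_i, where s = Σ_{i=1}^n s_{(n−i)} p^{n−i} is the base-p expansion of s. Then the map s ↦ 𝔟(s) mod p^n is a bijection from {0,...,p^n−1} to ℤ/p^nℤ. -/
/-- The `i`-th base-`p` digit of `s`. -/
def dig (p s i : ℕ) : ℕ := s / p ^ i % p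

/-- The function 𝔟(s) = Σ_{i=1}^n s_{(n−i)} p^{n−i} b_i. -/
def bfun (p n : ℕ) (b : ℕ → ℤ) (s : ℕ) : ℤ :=
  ∑ i ∈ Finset.Icc 1 n, (dig p s (n - i) : ℤ) * (p : ℤ) ^ (n - i) * b i

lemma dig_succ (p s j : ℕ) : dig p s (j + 1) = dig p (s / p) j := by
  simp [dig, Nat.div_div_eq_div_mul, pow_succ, mul_comm]

lemma key (p : ℕ) (hp : p.Prime) :
    ∀ n (c : ℕ → ℤ), (∀ j < n, IsCoprime (c j) (p : ℤ)) →
    ∀ s t : ℕ, s < p ^ n → t < p ^ n →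
    ((p : ℤ) ^ n ∣ (∑ j ∈ Finset.range n, (dig p s j : ℤ) * (p : ℤ) ^ j * c j)
      - ∑ j ∈ Finset.range n, (dig p t j : ℤ) * (p : ℤ) ^ j * c j) → s = t := by
  intro n
  induction n with
  | zero => intro c _ s t hs ht _; simp [pow_zero] at hs ht; omega
  | succ n ih =>
    intro c hc s t hs ht hdvd
    have hp0 : 0 < p := hp.pos
    have hsplit : ∀ u : ℕ,
        (∑ j ∈ Finset.range (n + 1), (dig p u j : ℤ) * (p : ℤ) ^ j * c j)
        = (p : ℤ) * (∑ j ∈ Finset.range n, (dig p (u / p) j : ℤ) * (p : ℤ) ^ j * c (j + 1))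
          + (dig p u 0 : ℤ) * c 0 := by
      intro u
      rw [Finset.sum_range_succ']
      rw [Finset.mul_sum]
      simp only [dig_succ, pow_succ, pow_zero, mul_one]
      congr 1
      exact Finset.sum_congr rfl (fun x _ => by ring)
    rw [hsplit s, hsplit t] at hdvd
    have hd0 : dig p s 0 = dig p t 0 := by
      have hpdvd : (p : ℤ) ∣ ((dig p s 0 : ℤ) - dig p t 0) * c 0 := by
        have h1 : (p : ℤ) ∣ (p : ℤ) ^ (n + 1) := dvd_pow_self _ (Nat.succ_ne_zero n)
        have h2 := dvd_trans h1 hdvd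
        have h3 : (p : ℤ) ∣ (p : ℤ) * (∑ j ∈ Finset.range n, (dig p (s / p) j : ℤ) * (p : ℤ) ^ j * c (j + 1))
            - (p : ℤ) * (∑ j ∈ Finset.range n, (dig p (t / p) j : ℤ) * (p : ℤ) ^ j * c (j + 1)) := by
          exact dvd_sub (Dvd.intro _ rfl) (Dvd.intro _ rfl)
        have := dvd_sub h2 h3
        convert this using 1
        · rfl
        · ring
      have hcop : IsCoprime ((p : ℤ)) (c 0) := (hc 0 (Nat.succ_pos n)).symm
      have hpd : (p : ℤ) ∣ ((dig p s 0 : ℤ) - dig p t 0) :=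
        hcop.dvd_of_dvd_mul_right hpdvd
      have h1 : dig p s 0 < p := Nat.mod_lt _ hp0
      have h2 : dig p t 0 < p := Nat.mod_lt _ hp0
      have := Int.eq_zero_of_abs_lt_dvd hpd (by
        rw [abs_lt]; constructor <;> [push_cast; push_cast] <;> omega)
      omega
    have hdvd' : (p : ℤ) ^ n ∣
        (∑ j ∈ Finset.range n, (dig p (s / p) j : ℤ) * (p : ℤ) ^ j * c (j + 1))
        - ∑ j ∈ Finset.range n, (dig p (t / p) j : ℤ) * (p : ℤ) ^ j * c (j + 1) := by
      have hp' : (p : ℤ) ≠ 0 := by exact_mod_cast hp0.ne'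
      rw [hd0] at hdvd
      have : (p : ℤ) ^ (n + 1) ∣ (p : ℤ) *
          ((∑ j ∈ Finset.range n, (dig p (s / p) j : ℤ) * (p : ℤ) ^ j * c (j + 1))
          - ∑ j ∈ Finset.range n, (dig p (t / p) j : ℤ) * (p : ℤ) ^ j * c (j + 1)) := by
        convert hdvd using 1; ring
      rw [pow_succ'] at this
      exact (mul_dvd_mul_iff_left hp').mp this
    have hsq : s / p < p ^ n := by
      rw [Nat.div_lt_iff_lt_mul hp0]
      calc s < p ^ (n + 1) := hs
        _ = p ^ n * p := pow_succ p n
    have htq : t / p < p ^ n := by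
      rw [Nat.div_lt_iff_lt_mul hp0]
      calc t < p ^ (n + 1) := ht
        _ = p ^ n * p := pow_succ p n
    have hq : s / p = t / p :=
      ih (fun j => c (j + 1)) (fun j hj => hc (j + 1) (by omega)) _ _ hsq htq hdvd'
    have hm : s % p = t % p := by simpa [dig] using hd0
    have e1 := Nat.div_add_mod s p
    have e2 := Nat.div_add_mod t p
    rw [hq, hm] at e1
    omega

lemma bfun_eq_range (p n : ℕ) (b : ℕ → ℤ) (s : ℕ) :
    bfun p n b s = ∑ j ∈ Finset.range n, (dig p s j : ℤ) * (p : ℤ) ^ j * b (n - j) := by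
  unfold bfun
  refine Finset.sum_nbij' (fun i => n - i) (fun j => n - j) ?_ ?_ ?_ ?_ ?_
  · intro i hi; simp only [Finset.mem_Icc] at hi; simp only [Finset.mem_range]; omega
  · intro j hj; simp only [Finset.mem_range] at hj; simp only [Finset.mem_Icc]; omega
  · intro i hi; simp only [Finset.mem_Icc] at hi; show n - (n - i) = i; omega
  · intro j hj; simp only [Finset.mem_range] at hj; show n - (n - j) = j; omega
  · intro i hi; simp only [Finset.mem_Icc] at hi
    have : n - (n - i) = i := by omega
    rw [this]

theorem stmt_2 (p n : ℕ) (hp : p.Prime) (hn : 1 ≤ n) (b : ℕ → ℤ)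
    (hb : ∀ i ∈ Finset.Icc 1 n, IsCoprime (b i) (p : ℤ)) :
    Function.Bijective
      (fun s : Fin (p ^ n) => ((bfun p n b s : ℤ) : ZMod (p ^ n))) := by
  have hpn : 0 < p ^ n := Nat.pow_pos (n := n) hp.pos
  haveI : NeZero (p ^ n) := ⟨hpn.ne'⟩
  rw [Fintype.bijective_iff_injective_and_card]
  constructor
  · intro s t h
    simp only at h
    have hmod : (bfun p n b s : ℤ) ≡ bfun p n b t [ZMOD ((p ^ n : ℕ) : ℤ)] :=
      (ZMod.intCast_eq_intCast_iff _ _ _).mp h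
    have hdvd : ((p : ℤ)) ^ n ∣ bfun p n b s - bfun p n b t := by
      have := Int.ModEq.dvd hmod
      have h2 : ((p ^ n : ℕ) : ℤ) = (p : ℤ) ^ n := by push_cast; ring
      rw [h2] at this
      exact (dvd_sub_comm).mp this
    rw [bfun_eq_range, bfun_eq_range] at hdvd
    have hc : ∀ j < n, IsCoprime (b (n - j)) (p : ℤ) := by
      intro j hj
      exact hb (n - j) (Finset.mem_Icc.mpr ⟨by omega, by omega⟩)
    have := key p hp n (fun j => b (n - j)) hc s t s.isLt t.isLt hdvd
    exact Fin.ext this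
  · simp [ZMod.card]
end

section
/- Let p be prime, n ≥ 1, and 0 < b' < p^n − 1 with gcd(b', p) = 1. Set d(s) = 1 + ⌊(b'·s − 1)/p^n⌋ and w(s) = min{d(u) − d(u−s) : u ∈ {0,...,p^n−1}, s ⪯ u}. Then there exists s with 0 < s < p^n − 1 such that w(s) < d(s). (Hence the inverse different ideal is not free over its associated order unless b' = p^n − 1.) -/
/-- Digitwise partial order on base-`p` expansions: `s ⪯ t`. -/
def preceq (p s t : ℕ) : Prop := ∀ i, dig p s i ≤ dig p t i

/-- Inverse-different case: `d(s) = 1 + ⌊(b'·s − 1)/p^n⌋`. -/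
def dfun (p n b' : ℕ) (s : ℕ) : ℤ := 1 + Int.fdiv ((b' : ℤ) * s - 1) ((p : ℤ) ^ n)

/-- `w(s) = min { d(u) − d(u−s) : u ∈ {0,…,p^n−1}, s ⪯ u }`. -/
noncomputable def wfun (p n b' : ℕ) (s : ℕ) : ℤ :=
  sInf ((fun u => dfun p n b' u - dfun p n b' (u - s)) ''
    {u : ℕ | u < p ^ n ∧ preceq p s u})

private lemma fdiv_helper {P : ℤ} (k r : ℤ) (hP : 0 < P) (hr0 : 0 ≤ r) (hrP : r < P) :
    Int.fdiv (k * P + r) P = k := by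
  rw [Int.fdiv_eq_ediv_of_nonneg _ hP.le, add_comm, Int.add_mul_ediv_right _ _ hP.ne',
    Int.ediv_eq_zero_of_lt hr0 hrP, zero_add]

private lemma dfun_eq {p n b' : ℕ} (m : ℕ) (k r : ℤ)
    (hP : 0 < (p : ℤ) ^ n) (hr0 : 0 ≤ r) (hrP : r < (p : ℤ) ^ n)
    (h : (b' : ℤ) * m - 1 = k * (p : ℤ) ^ n + r) :
    dfun p n b' m = 1 + k := by
  rw [dfun, h, fdiv_helper k r hP hr0 hrP]

private lemma dig_pred_pow {p : ℕ} (hp : 1 < p) {n i : ℕ} (hi : i < n) :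
    dig p (p ^ n - 1) i = p - 1 := by
  have hp0 : 0 < p := by omega
  have hA : 0 < p ^ i := Nat.pow_pos hp0
  have hC : 0 < p ^ (n - i - 1) := Nat.pow_pos hp0
  have hkey : p ^ n - 1 = p ^ i * (p * (p ^ (n - i - 1) - 1) + (p - 1)) + (p ^ i - 1) := by
    have h1 : p ^ n = p ^ i * (p * p ^ (n - i - 1)) := by
      rw [← pow_succ', ← pow_add]; congr 1; omega
    have hPn : 1 ≤ p ^ n := Nat.one_le_pow _ _ (by omega)
    zify [hA, hC, hPn, hp.le]
    have h1Z : ((p : ℤ)) ^ n = (p : ℤ) ^ i * ((p : ℤ) * (p : ℤ) ^ (n - i - 1)) := by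
      exact_mod_cast h1
    rw [h1Z]; ring
  rw [dig, hkey, Nat.mul_add_div hA, Nat.div_eq_of_lt (by omega), Nat.add_zero,
    Nat.mul_add_mod, Nat.mod_eq_of_lt (by omega)]

private lemma preceq_max {p n s : ℕ} (hp : 1 < p) (hs : s < p ^ n) :
    preceq p s (p ^ n - 1) := by
  intro i
  by_cases hi : i < n
  · rw [dig_pred_pow hp hi]
    have : dig p s i < p := Nat.mod_lt _ (by omega)
    omega
  · have : s < p ^ i := lt_of_lt_of_le hs (Nat.pow_le_pow_right (by omega) (by omega))
    simp [dig, Nat.div_eq_of_lt this]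

theorem stmt_8 (p n : ℕ) (hp : p.Prime) (hn : 1 ≤ n) (b' : ℕ)
    (hb0 : 0 < b') (hbu : b' < p ^ n - 1) (hcop : Nat.Coprime b' p) :
    ∃ s : ℕ, 0 < s ∧ s < p ^ n - 1 ∧ wfun p n b' s < dfun p n b' s := by
  have hp1 : 1 < p := hp.one_lt
  have hP : 1 < p ^ n := Nat.one_lt_pow (by omega) hp1
  set P := p ^ n with hPdef
  have hcopP : Nat.Coprime b' P := hcop.pow_right n
  obtain ⟨s0, -, hs0⟩ := Nat.exists_mul_mod_eq_one_of_coprime hcopP hP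
  set s := s0 % P with hsdef
  have hmod : b' * s % P = 1 := by
    rw [hsdef, Nat.mul_mod, Nat.mod_mod_of_dvd _ dvd_rfl, ← Nat.mul_mod, hs0]
  have hslt : s < P := Nat.mod_lt _ (by omega)
  set q := b' * s / P with hq
  have hqe : b' * s = P * q + 1 := by
    conv_lhs => rw [← Nat.div_add_mod (b' * s) P]
    rw [hmod, ← hq]
  have hspos : 0 < s := by
    rcases Nat.eq_zero_or_pos s with h | h
    · rw [h, Nat.mul_zero] at hqe; omega
    · exact h
  -- integer versions
  have hPZ : (0 : ℤ) < (p : ℤ) ^ n := by positivity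
  have hPZ' : ((P : ℕ) : ℤ) = (p : ℤ) ^ n := by push_cast [hPdef]; ring
  have hbZ : (1 : ℤ) ≤ (b' : ℤ) := by exact_mod_cast hb0
  have hbu' : (b' : ℤ) ≤ (p : ℤ) ^ n - 2 := by
    have h : (b' : ℤ) + 2 ≤ (P : ℤ) := by exact_mod_cast (by omega : b' + 2 ≤ P)
    linarith [hPZ'.le, hPZ'.ge]
  have hqeZ : (b' : ℤ) * s = (p : ℤ) ^ n * q + 1 := by
    have h : (b' : ℤ) * s = (P : ℤ) * q + 1 := by exact_mod_cast hqe
    rw [h, hPZ']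
  -- s ≠ P - 1
  have hsne : s ≠ P - 1 := by
    intro h
    have hsZ : (s : ℤ) = (p : ℤ) ^ n - 1 := by
      rw [h, Nat.cast_sub (by omega : 1 ≤ P), hPZ']; norm_num
    have hdvd : ((p : ℤ) ^ n) ∣ ((b' : ℤ) + 1) := by
      refine ⟨(b' : ℤ) - q, ?_⟩
      have := hqeZ
      rw [hsZ] at this
      ring_nf
      ring_nf at this
      linarith
    have h1 : (b' : ℤ) + 1 < (p : ℤ) ^ n := by linarith
    have h2 : (0 : ℤ) < (b' : ℤ) + 1 := by linarith
    have := Int.le_of_dvd h2 hdvd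
    linarith
  -- d(s) = 1 + q
  have hds : dfun p n b' s = 1 + q :=
    dfun_eq s q 0 hPZ le_rfl hPZ (by rw [hqeZ]; ring)
  -- d(P-1) = b'
  have hNlt : P - 1 < P := by omega
  have hNZ : ((P - 1 : ℕ) : ℤ) = (p : ℤ) ^ n - 1 := by
    rw [Nat.cast_sub (by omega : 1 ≤ P), hPZ']; norm_num
  have hdN : dfun p n b' (P - 1) = (b' : ℤ) := by
    have := dfun_eq (p := p) (n := n) (b' := b') (P - 1) ((b' : ℤ) - 1) ((p : ℤ) ^ n - b' - 1)
      hPZ (by linarith) (by linarith) (by rw [hNZ]; ring)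
    rw [this]; ring
  -- d(P-1-s) = b' - q
  have htZ : ((P - 1 - s : ℕ) : ℤ) = (p : ℤ) ^ n - 1 - s := by
    rw [Nat.cast_sub (by omega : s ≤ P - 1), Nat.cast_sub (by omega : 1 ≤ P), hPZ']
    norm_num
  have hdt : dfun p n b' (P - 1 - s) = (b' : ℤ) - q := by
    have := dfun_eq (p := p) (n := n) (b' := b') (P - 1 - s) ((b' : ℤ) - q - 1)
      ((p : ℤ) ^ n - b' - 2) hPZ (by linarith) (by linarith)
      (by rw [htZ]; linear_combination -hqeZ)
    rw [this]; ring
  -- conclude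
  refine ⟨s, hspos, by omega, ?_⟩
  have hfin : ((fun u => dfun p n b' u - dfun p n b' (u - s)) ''
      {u : ℕ | u < p ^ n ∧ preceq p s u}).Finite :=
    Set.Finite.image _ ((Set.finite_Iio (p ^ n)).subset (fun u hu => hu.1))
  have hmem : dfun p n b' (P - 1) - dfun p n b' (P - 1 - s) ∈
      ((fun u => dfun p n b' u - dfun p n b' (u - s)) ''
      {u : ℕ | u < p ^ n ∧ preceq p s u}) :=
    ⟨P - 1, ⟨hNlt, preceq_max hp1 hslt⟩, rfl⟩
  have hle : wfun p n b' s ≤ dfun p n b' (P - 1) - dfun p n b' (P - 1 - s) :=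
    csInf_le hfin.bddBelow hmem
  rw [hdN, hdt] at hle
  rw [hds]
  have : (b' : ℤ) - ((b' : ℤ) - q) = q := by ring
  rw [this] at hle
  linarith
end

section
/- Weakly ramified generator count: let p be prime, n ≥ 1, 2 ≤ h < 1 + p^n/2, m = h−1, k = p^n − m. Define d(s) = [s ≥ m], w(s) = [s ≥ k], and 𝔇 = { u ∈ {0,...,p^n−1} : d(u) > d(u−s) + w(s) for all s with 0 ≺ s ⪯ u }. Then |𝔇| = 2 + α(m) − β(m), where α(m) is the number of indices j with v_p(m) < j ≤ n−1 and the j-th base-p digit of m is not p−1, and β(m) is the largest c with 0 ≤ c < n − v_p(m) such that the digits m_{(n−1)} = ... = m_{(n−c)} = (p−1)/2. -/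
/-- `α(m)`: the number of indices `j` with `v_p(m) < j ≤ n−1` whose base-`p` digit of `m`
is not `p−1`. -/
def alphaCount (p n m : ℕ) : ℕ :=
  ((Finset.Ioc (padicValNat p m) (n - 1)).filter (fun j => dig p m j ≠ p - 1)).card

/-- `β(m)`: the largest `c` with `0 ≤ c < n − v_p(m)` such that the digits
`m_{(n−1)}, …, m_{(n−c)}` all equal `(p−1)/2` (taken to be `0` when `p = 2`). -/
def betaCount (p n m : ℕ) : ℕ :=
  if p = 2 then 0 else
    Nat.findGreatest (fun c => c < n - padicValNat p m ∧
      ∀ j, n - c ≤ j → j ≤ n - 1 → dig p m j = (p - 1) / 2) n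

namespace WrAux

lemma dig_shift (p s t i : ℕ) : dig p (s / p ^ t) i = dig p s (t + i) := by
  unfold dig
  rw [Nat.div_div_eq_div_mul, ← pow_add]

lemma preceq_le {p : ℕ} (hp : 2 ≤ p) : ∀ s u, preceq p s u → s ≤ u := by
  intro s
  induction s using Nat.strong_induction_on with
  | _ s ih =>
    intro u hsu
    rcases Nat.eq_zero_or_pos s with rfl | hs
    · exact Nat.zero_le u
    · have h0 : s % p ≤ u % p := by
        have := hsu 0
        simpa [dig] using this
      have hdiv : s / p ≤ u / p := by
        have : preceq p (s / p) (u / p) := by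
          intro i
          have h1 : dig p (s / p ^ 1) i = dig p s (1 + i) := dig_shift p s 1 i
          have h2 : dig p (u / p ^ 1) i = dig p u (1 + i) := dig_shift p u 1 i
          simp only [pow_one] at h1 h2
          rw [h1, h2]; exact hsu (1 + i)
        exact ih (s / p) (Nat.div_lt_self hs (by omega)) (u / p) this
      have e1 := Nat.div_add_mod s p
      have e2 := Nat.div_add_mod u p
      have : p * (s / p) ≤ p * (u / p) := Nat.mul_le_mul_left p hdiv
      omega

lemma dig_eq_zero_of_dvd {p t u : ℕ} (hp : 2 ≤ p) (h : p ^ t ∣ u) {i : ℕ} (hi : i < t) :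
    dig p u i = 0 := by
  obtain ⟨c, rfl⟩ := h
  unfold dig
  have : p ^ t = p ^ i * p ^ (t - i) := by rw [← pow_add]; congr 1; omega
  rw [this, mul_assoc, Nat.mul_div_cancel_left _ (Nat.pow_pos (n := i) (by omega))]
  apply Nat.mod_eq_zero_of_dvd
  exact Dvd.dvd.mul_right (dvd_pow_self p (by omega)) c

lemma dvd_of_dig_eq_zero {p : ℕ} (hp : 2 ≤ p) :
    ∀ t u, (∀ i < t, dig p u i = 0) → p ^ t ∣ u := by
  intro t
  induction t with
  | zero => intro u _; simp
  | succ t ih =>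
    intro u hu
    have h0 : p ∣ u := by
      have := hu 0 (by omega)
      simp [dig] at this
      exact Nat.dvd_of_mod_eq_zero this
    have h1 : p ^ t ∣ u / p := by
      apply ih
      intro i hi
      have := dig_shift p u 1 i
      simp only [pow_one] at this
      rw [this]
      exact hu (1 + i) (by omega)
    obtain ⟨c, hc⟩ := h1
    have : u = p * (u / p) := (Nat.mul_div_cancel' h0).symm
    rw [this, hc, pow_succ]
    ring_nf
    exact Dvd.intro c (by ring)


/-- least multiple of `p^t` that is `≥ m` (for `m ≥ 1`). -/
def Uc (p m t : ℕ) : ℕ := ((m - 1) / p ^ t + 1) * p ^ t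

variable {p m t : ℕ}

lemma Uc_ge (hp : 2 ≤ p) (hm : 1 ≤ m) : m ≤ Uc p m t := by
  unfold Uc
  have hP : 0 < p ^ t := Nat.pow_pos (n := t) (by omega)
  have h1 := Nat.div_add_mod (m - 1) (p ^ t)
  have h2 : (m - 1) % p ^ t < p ^ t := Nat.mod_lt _ hP
  have : ((m-1)/p^t + 1) * p^t = p^t * ((m-1)/p^t) + p^t := by ring
  omega

lemma Uc_lt (hp : 2 ≤ p) (hm : 1 ≤ m) : Uc p m t < m + p ^ t := by
  unfold Uc
  have h1 : (m - 1) / p ^ t * p ^ t ≤ m - 1 := Nat.div_mul_le_self _ _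
  have : ((m-1)/p^t + 1) * p^t = (m-1)/p^t * p^t + p^t := by ring
  omega

lemma Uc_dvd : p ^ t ∣ Uc p m t := Dvd.intro _ (mul_comm _ _)

lemma Uc_unique (hp : 2 ≤ p) (hm : 1 ≤ m) {u : ℕ} (hd : p ^ t ∣ u) (h1 : m ≤ u)
    (h2 : u < m + p ^ t) : u = Uc p m t := by
  have hP : 0 < p ^ t := Nat.pow_pos (n := t) (by omega)
  obtain ⟨a, rfl⟩ := hd
  obtain ⟨b, hb⟩ : p ^ t ∣ Uc p m t := Uc_dvd
  have hU1 : m ≤ Uc p m t := Uc_ge hp hm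
  have hU2 : Uc p m t < m + p ^ t := Uc_lt hp hm
  rw [hb] at hU1 hU2 ⊢
  have hab : a = b := by
    have h3 : p ^ t * a < p ^ t * b + p ^ t := by omega
    have h4 : p ^ t * b < p ^ t * a + p ^ t := by omega
    have h3' : p ^ t * a < p ^ t * (b + 1) := by rw [Nat.mul_add]; omega
    have h4' : p ^ t * b < p ^ t * (a + 1) := by rw [Nat.mul_add]; omega
    have := Nat.lt_of_mul_lt_mul_left h3'
    have := Nat.lt_of_mul_lt_mul_left h4'
    omega
  rw [hab]

lemma Uc_min (hp : 2 ≤ p) (hm : 1 ≤ m) {u : ℕ} (hd : p ^ t ∣ u) (h1 : m ≤ u) :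
    Uc p m t ≤ u := by
  by_contra hlt
  push_neg at hlt
  have : u = Uc p m t := Uc_unique hp hm hd h1 (lt_of_lt_of_le hlt (by
    have := Uc_lt (p := p) (m := m) (t := t) hp hm; omega))
  omega

lemma Uc_eq_of_dvd (hp : 2 ≤ p) (hm : 1 ≤ m) (hd : p ^ t ∣ m) : Uc p m t = m :=
  (Uc_unique hp hm hd le_rfl (by have : 0 < p ^ t := Nat.pow_pos (n := t) (by omega); omega)).symm

lemma Uc_eq_of_not_dvd (hp : 2 ≤ p) (hm : 1 ≤ m) (hd : ¬ p ^ t ∣ m) :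
    Uc p m t = (m / p ^ t + 1) * p ^ t := by
  unfold Uc
  congr 2
  have hP : 0 < p ^ t := Nat.pow_pos (n := t) (by omega)
  have hr : m % p ^ t ≠ 0 := fun h => hd (Nat.dvd_of_mod_eq_zero h)
  have h1 := Nat.div_add_mod m (p ^ t)
  -- m - 1 = p^t * (m/p^t) + (m % p^t - 1)
  have : m - 1 = p ^ t * (m / p ^ t) + (m % p ^ t - 1) := by omega
  rw [this, Nat.mul_add_div hP]
  have : (m % p ^ t - 1) / p ^ t = 0 := Nat.div_eq_of_lt (by have := Nat.mod_lt m hP; omega)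
  omega

lemma Uc_succ_dvd_iff (hp : 2 ≤ p) (hm : 1 ≤ m) :
    p ^ (t + 1) ∣ Uc p m t ↔ dig p (m - 1) t = p - 1 := by
  unfold Uc dig
  set q := (m - 1) / p ^ t with hq
  have hP : 0 < p ^ t := Nat.pow_pos (n := t) (by omega)
  rw [pow_succ]
  constructor
  · intro hdvd
    have hpd : p ∣ q + 1 := by
      rcases hdvd with ⟨c, hc⟩
      have : (q + 1) * p ^ t = p ^ t * (p * c) := by rw [hc]; ring
      have h2 : q + 1 = p * c :=
        Nat.eq_of_mul_eq_mul_left hP (by linarith [this, mul_comm (q+1) (p^t)])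
      exact ⟨c, h2⟩
    rcases hpd with ⟨c, hc⟩
    have hc1 : 1 ≤ c := by nlinarith [hp, hc]
    have : q % p = p - 1 := by
      have : q = p * (c - 1) + (p - 1) := by
        have hpc : p * c = p * (c - 1) + p := by
          have hc' : c = (c - 1) + 1 := by omega
          calc p * c = p * ((c-1)+1) := by rw [← hc']
          _ = p * (c-1) + p := by ring
        omega
      rw [this, Nat.mul_add_mod]
      exact Nat.mod_eq_of_lt (by omega)
    exact this
  · intro hmod
    have : p ∣ q + 1 := by
      have h1 := Nat.div_add_mod q p
      have : q + 1 = p * (q / p) + p := by omega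
      rw [this]
      exact Dvd.dvd.add (Dvd.intro _ rfl) (dvd_refl p)
    rcases this with ⟨c, hc⟩
    rw [hc]
    exact ⟨c, by ring⟩


lemma ku {p n m t : ℕ} (hp : 2 ≤ p) (hm : 1 ≤ m) (h2m : 2 * m < p ^ n) (ht : t ≤ n) :
    p ^ n - m ≤ Uc p m t ↔ ¬ p ^ t ∣ m ∧ 2 * (m / p ^ t) + 1 = p ^ (n - t) := by
  have hP : 0 < p ^ t := Nat.pow_pos (n := t) (by omega)
  have hpn : p ^ n = p ^ (n - t) * p ^ t := by rw [← pow_add]; congr 1; omega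
  by_cases hd : p ^ t ∣ m
  · rw [Uc_eq_of_dvd hp hm hd]
    simp only [hd, not_true_eq_false, false_and, iff_false]
    omega
  · rw [Uc_eq_of_not_dvd hp hm hd]
    simp only [hd, not_false_eq_true, true_and]
    set q := m / p ^ t with hq
    set r := m % p ^ t with hr
    have h1 : m = p ^ t * q + r := (Nat.div_add_mod m (p ^ t)).symm
    have hr1 : 1 ≤ r := by
      rcases Nat.eq_zero_or_pos r with h | h
      · exact absurd (Nat.dvd_of_mod_eq_zero h) hd
      · exact h
    have hrP : r < p ^ t := Nat.mod_lt m hP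
    have hqlt : 2 * q < p ^ (n - t) := by
      by_contra hc
      push_neg at hc
      have : p ^ (n - t) * p ^ t ≤ 2 * q * p ^ t := Nat.mul_le_mul_right _ hc
      nlinarith
    constructor
    · intro hge
      -- p^n ≤ Uc + m = (2q+1)p^t + r
      have hsum : (q + 1) * p ^ t + m = (2 * q + 1) * p ^ t + r := by
        rw [h1]; ring
      have hge' : p ^ n ≤ (2 * q + 1) * p ^ t + r := by omega
      by_contra hne
      have hlt : 2 * q + 1 < p ^ (n - t) := by omega
      have : (2 * q + 1 + 1) * p ^ t ≤ p ^ (n - t) * p ^ t := Nat.mul_le_mul_right _ (by omega)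
      nlinarith
    · intro heq
      have : (q + 1) * p ^ t + m = p ^ (n - t) * p ^ t + r := by
        rw [h1, ← heq]; ring
      omega

lemma half_digits {p : ℕ} (hp : p.Prime) (hodd : p ≠ 2) :
    ∀ N q, q < p ^ N → (2 * q + 1 = p ^ N ↔ ∀ j < N, dig p q j = (p - 1) / 2) := by
  have hp3 : 3 ≤ p := by
    have := hp.two_le
    rcases Nat.lt_or_ge p 3 with h | h
    · interval_cases p
      · exact absurd rfl hodd
    · exact h
  have hpo : p % 2 = 1 := Nat.odd_iff.mp (hp.odd_of_ne_two hodd)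
  intro N
  induction N with
  | zero => intro q hq; simp at hq ⊢; omega
  | succ N ih =>
    intro q hq
    have hPp : (0:ℕ) < p := by omega
    have hd0 : dig p q 0 = q % p := by simp [dig]
    have hds : ∀ j, dig p q (j + 1) = dig p (q / p) j := by
      intro j
      unfold dig
      rw [Nat.div_div_eq_div_mul, ← pow_succ']
    have hqp : q / p < p ^ N := by
      rw [Nat.div_lt_iff_lt_mul hPp, ← pow_succ]
      exact hq
    have e1 := Nat.div_add_mod q p
    have e2 : q % p < p := Nat.mod_lt q hPp
    have hpow : p ^ (N + 1) = p * p ^ N := by rw [pow_succ']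
    constructor
    · intro heq
      -- 2(p*(q/p)) + 2(q%p)+1 = p * p^N
      have key : q % p = (p - 1) / 2 ∧ 2 * (q / p) + 1 = p ^ N := by
        have hmod : (2 * (q % p) + 1) % p = 0 := by
          have : (2 * q + 1) % p = 0 := by
            rw [heq, hpow]
            simp [Nat.mul_mod_right]
          have h2 : (2 * q + 1) % p = (2 * (q % p) + 1) % p := by
            conv_lhs => rw [← e1]
            rw [show 2 * (p * (q / p) + q % p) + 1 = p * (2 * (q/p)) + (2 * (q % p) + 1) by ring]
            rw [Nat.mul_add_mod]
          omega
        have h2qp : 2 * (q % p) + 1 = p := by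
          have hlt : 2 * (q % p) + 1 < 2 * p := by omega
          have hpos : 0 < 2 * (q % p) + 1 := by omega
          rcases Nat.lt_or_ge (2 * (q % p) + 1) p with h | h
          · rw [Nat.mod_eq_of_lt h] at hmod; omega
          · have : 2 * (q % p) + 1 - p < p := by omega
            have hmm : (2 * (q % p) + 1) % p = 2 * (q % p) + 1 - p := by
              rw [Nat.mod_eq_sub_mod h, Nat.mod_eq_of_lt this]
            omega
        constructor
        · omega
        · -- 2q+1 = p*p^N, q = p*(q/p) + (p-1)/2, so p*(2*(q/p)) + p = p*p^N
          have hfin : p * (2 * (q / p) + 1) = p * p ^ N := by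
            have h5 : 2 * q + 1 = p * (2 * (q / p)) + (2 * (q % p) + 1) := by
              conv_lhs => rw [← e1]
              ring
            rw [heq, hpow] at h5
            rw [mul_add, mul_one]
            linarith
          exact Nat.eq_of_mul_eq_mul_left hPp hfin
      intro j hj
      rcases j with _ | j
      · rw [hd0]; exact key.1
      · rw [hds]
        exact (ih (q / p) hqp).mp key.2 j (by omega)
    · intro hdig
      have h0 : q % p = (p - 1) / 2 := by rw [← hd0]; exact hdig 0 (by omega)
      have hN : 2 * (q / p) + 1 = p ^ N := by
        apply (ih (q / p) hqp).mpr
        intro j hj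
        rw [← hds]
        exact hdig (j + 1) (by omega)
      -- 2q + 1 = 2(p*(q/p)) + 2*((p-1)/2) + 1 = p*(2*(q/p)) + p = p*(2*(q/p)+1) = p^(N+1)
      have h2e : 2 * ((p - 1) / 2) + 1 = p := by omega
      calc 2 * q + 1 = p * (2 * (q / p)) + (2 * (q % p) + 1) := by
            conv_lhs => rw [← e1]
            ring
        _ = p * (2 * (q / p)) + p := by rw [h0, h2e]
        _ = p * (2 * (q / p) + 1) := by ring
        _ = p * p ^ N := by rw [hN]
        _ = p ^ (N + 1) := by rw [← hpow]


section
variable {p n m t : ℕ}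

lemma v_lt_n (hp : p.Prime) (hm : 1 ≤ m) (h2m : 2 * m < p ^ n) :
    padicValNat p m < n := by
  have h1 : p ^ padicValNat p m ∣ m := pow_padicValNat_dvd
  have h2 : p ^ padicValNat p m ≤ m := Nat.le_of_dvd (by omega) h1
  have h3 : m < p ^ n := by omega
  by_contra hc
  push_neg at hc
  have : p ^ n ≤ p ^ padicValNat p m :=
    Nat.pow_le_pow_right (by have := hp.two_le; omega) (by omega)
  omega

lemma Uc_lt_k_iff (hp : p.Prime) (hn : 1 ≤ n) (hm : 1 ≤ m) (h2m : 2 * m < p ^ n)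
    {t : ℕ} (ht : t ≤ n) :
    Uc p m t < p ^ n - m ↔ t < n - betaCount p n m := by
  haveI : Fact p.Prime := ⟨hp⟩
  have hp2 : 2 ≤ p := hp.two_le
  have hm0 : m ≠ 0 := by omega
  have hv : padicValNat p m < n := v_lt_n hp hm h2m
  have hdvd_iff : ∀ s : ℕ, p ^ s ∣ m ↔ s ≤ padicValNat p m := fun s =>
    padicValNat_dvd_iff_le hm0
  rw [← Nat.not_le, ku hp2 hm h2m ht]
  by_cases hpo : p = 2
  · subst hpo
    have hb0 : betaCount 2 n m = 0 := by simp [betaCount]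
    rw [hb0, Nat.sub_zero]
    constructor
    · intro hcon
      rcases Nat.lt_or_ge t n with hlt | hge
      · exact hlt
      · exfalso
        apply hcon
        have htn : t = n := by omega
        constructor
        · rw [hdvd_iff]; omega
        · have h0 : m / 2 ^ t = 0 := Nat.div_eq_of_lt (by rw [htn]; omega)
          rw [h0, htn, Nat.sub_self]
          simp
    · rintro htn ⟨h1, h2⟩
      have : 2 ^ (n - t) = 2 * 2 ^ (n - t - 1) := by
        rw [← pow_succ']
        congr 1
        omega
      omega
  · -- p odd
    set v := padicValNat p m with hvdef
    set Pred := fun c => c < n - v ∧ ∀ j, n - c ≤ j → j ≤ n - 1 → dig p m j = (p - 1) / 2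
      with hPred
    have hbeta : betaCount p n m = Nat.findGreatest Pred n := by
      rw [betaCount, if_neg hpo]
    have hPred0 : Pred 0 := by
      constructor
      · omega
      · intro j h1 h2; omega
    have hPmono : ∀ c c', c' ≤ c → Pred c → Pred c' := by
      rintro c c' hle ⟨h1, h2⟩
      exact ⟨by omega, fun j hj1 hj2 => h2 j (by omega) hj2⟩
    have hPbeta : Pred (Nat.findGreatest Pred n) := Nat.findGreatest_spec (Nat.zero_le n) hPred0
    have hPiff : ∀ c, c ≤ n → (Pred c ↔ c ≤ Nat.findGreatest Pred n) := by
      intro c hc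
      constructor
      · exact fun h => Nat.le_findGreatest hc h
      · exact fun h => hPmono _ _ h hPbeta
    -- now the digit translation
    have hqlt : m / p ^ t < p ^ (n - t) := by
      rw [Nat.div_lt_iff_lt_mul (Nat.pow_pos (n := t) (by omega)), ← pow_add]
      have : n - t + t = n := by omega
      rw [this]
      omega
    have htrans : (¬ p ^ t ∣ m ∧ 2 * (m / p ^ t) + 1 = p ^ (n - t)) ↔ Pred (n - t) := by
      rw [hdvd_iff, half_digits hp hpo (n - t) _ hqlt]
      constructor
      · rintro ⟨h1, h2⟩
        refine ⟨by omega, fun j hj1 hj2 => ?_⟩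
        have hj : j - t < n - t := by omega
        have := h2 (j - t) hj
        rw [dig_shift] at this
        have : dig p m (t + (j - t)) = (p - 1) / 2 := this
        rwa [show t + (j - t) = j by omega] at this
      · rintro ⟨h1, h2⟩
        refine ⟨by omega, fun j hj => ?_⟩
        rw [dig_shift]
        exact h2 (t + j) (by omega) (by omega)
    rw [htrans, hbeta, hPiff (n - t) (by omega)]
    have hble : Nat.findGreatest Pred n < n - v := hPbeta.1
    omega


-- v := padicValNat p m
lemma dig_pred_of_lt (hp : p.Prime) (hm : 1 ≤ m) (htv : t < padicValNat p m) :
    dig p (m - 1) t = p - 1 := by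
  haveI : Fact p.Prime := ⟨hp⟩
  have hp2 : 2 ≤ p := hp.two_le
  have hP : 0 < p ^ t := Nat.pow_pos (n := t) (by omega)
  have hd : p ^ (t + 1) ∣ m := (padicValNat_dvd_iff_le (by omega)).mpr (by omega)
  obtain ⟨c, hc⟩ := hd
  have hc1 : 1 ≤ c := by
    rcases Nat.eq_zero_or_pos c with rfl | h
    · omega
    · exact h
  have hsplit : m - 1 = p ^ t * (c * p - 1) + (p ^ t - 1) := by
    have : p ^ (t+1) * c = p ^ t * (c * p) := by rw [pow_succ]; ring
    have hcp : 1 ≤ c * p := by nlinarith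
    have : p ^ t * (c * p) = p ^ t * (c * p - 1) + p ^ t := by
      have h2 : c * p = (c * p - 1) + 1 := by omega
      calc p ^ t * (c * p) = p ^ t * ((c * p - 1) + 1) := by rw [← h2]
        _ = p ^ t * (c * p - 1) + p ^ t := by ring
    omega
  unfold dig
  rw [hsplit, Nat.mul_add_div hP, Nat.div_eq_of_lt (by omega), Nat.add_zero]
  have : c * p - 1 = p * (c - 1) + (p - 1) := by
    have : c * p = p * (c - 1) + p := by
      calc c * p = p * ((c - 1) + 1) := by rw [show (c-1)+1 = c by omega]; ring
        _ = p * (c - 1) + p := by ring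
    omega
  rw [this, Nat.mul_add_mod]
  exact Nat.mod_eq_of_lt (by omega)

lemma dig_pred_of_eq (hp : p.Prime) (hm : 1 ≤ m) :
    dig p (m - 1) (padicValNat p m) ≠ p - 1 := by
  haveI : Fact p.Prime := ⟨hp⟩
  have hp2 : 2 ≤ p := hp.two_le
  set v := padicValNat p m with hv
  have hP : 0 < p ^ v := Nat.pow_pos (n := v) (by omega)
  obtain ⟨c, hc⟩ : p ^ v ∣ m := pow_padicValNat_dvd
  have hc1 : 1 ≤ c := by
    rcases Nat.eq_zero_or_pos c with rfl | h
    · omega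
    · exact h
  have hnd : ¬ p ∣ c := by
    intro ⟨e, he⟩
    have : p ^ (v + 1) ∣ m := ⟨e, by rw [hc, he, pow_succ]; ring⟩
    have := (padicValNat_dvd_iff_le (show m ≠ 0 by omega)).mp this
    omega
  have hsplit : m - 1 = p ^ v * (c - 1) + (p ^ v - 1) := by
    have : p ^ v * c = p ^ v * (c - 1) + p ^ v := by
      calc p ^ v * c = p ^ v * ((c - 1) + 1) := by rw [show (c-1)+1 = c by omega]
        _ = p ^ v * (c - 1) + p ^ v := by ring
    omega
  unfold dig
  rw [hsplit, Nat.mul_add_div hP, Nat.div_eq_of_lt (by omega), Nat.add_zero]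
  have hcm : c % p ≠ 0 := fun h => hnd (Nat.dvd_of_mod_eq_zero h)
  have e1 := Nat.div_add_mod c p
  have e2 : c % p < p := Nat.mod_lt c (by omega)
  have : c - 1 = p * (c / p) + (c % p - 1) := by omega
  rw [this, Nat.mul_add_mod, Nat.mod_eq_of_lt (by omega)]
  omega

lemma dig_pred_of_gt (hp : p.Prime) (hm : 1 ≤ m) (htv : padicValNat p m < t) :
    dig p (m - 1) t = dig p m t := by
  haveI : Fact p.Prime := ⟨hp⟩
  have hp2 : 2 ≤ p := hp.two_le
  have hP : 0 < p ^ t := Nat.pow_pos (n := t) (by omega)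
  have hnd : ¬ p ^ t ∣ m := fun hd =>
    absurd ((padicValNat_dvd_iff_le (show m ≠ 0 by omega)).mp hd) (by omega)
  have hr : m % p ^ t ≠ 0 := fun h => hnd (Nat.dvd_of_mod_eq_zero h)
  have e1 := Nat.div_add_mod m (p ^ t)
  unfold dig
  have : m - 1 = p ^ t * (m / p ^ t) + (m % p ^ t - 1) := by omega
  rw [this, Nat.mul_add_div hP,
    Nat.div_eq_of_lt (show m % p ^ t - 1 < p ^ t by have := Nat.mod_lt m hP; omega),
    Nat.add_zero]


lemma beta_bound (hp : p.Prime) (hn : 1 ≤ n) (hm : 1 ≤ m) (h2m : 2 * m < p ^ n) :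
    padicValNat p m + betaCount p n m < n := by
  have hv := v_lt_n hp hm h2m
  by_cases hpo : p = 2
  · subst hpo
    have hb0 : betaCount 2 n m = 0 := by simp [betaCount]
    omega
  · rw [betaCount, if_neg hpo]
    have h1 := (Nat.findGreatest_spec
      (P := fun c => c < n - padicValNat p m ∧
        ∀ j, n - c ≤ j → j ≤ n - 1 → dig p m j = (p - 1) / 2)
      (Nat.zero_le n) ⟨by omega, fun j hj1 hj2 => by omega⟩).1
    omega

lemma beta_digits (hp : p.Prime) (hn : 1 ≤ n) (hm : 1 ≤ m) (h2m : 2 * m < p ^ n)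
    (hb : 1 ≤ betaCount p n m) :
    p ≠ 2 ∧ ∀ j, n - betaCount p n m ≤ j → j ≤ n - 1 → dig p m j = (p - 1) / 2 := by
  have hv := v_lt_n hp hm h2m
  by_cases hpo : p = 2
  · subst hpo
    have hb0 : betaCount 2 n m = 0 := by simp [betaCount]
    omega
  · refine ⟨hpo, ?_⟩
    rw [betaCount, if_neg hpo]
    have h1 := (Nat.findGreatest_spec
      (P := fun c => c < n - padicValNat p m ∧
        ∀ j, n - c ≤ j → j ≤ n - 1 → dig p m j = (p - 1) / 2)
      (Nat.zero_le n) ⟨by omega, fun j hj1 hj2 => by omega⟩).2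
    exact h1

lemma preceq_pow (hp : p.Prime) {u : ℕ} (hu : u ≠ 0) :
    preceq p (p ^ padicValNat p u) u := by
  haveI : Fact p.Prime := ⟨hp⟩
  have hp2 : 2 ≤ p := hp.two_le
  have hd1 : p ^ padicValNat p u ∣ u := pow_padicValNat_dvd
  have hd2 : ¬ p ^ (padicValNat p u + 1) ∣ u := pow_succ_padicValNat_not_dvd hu
  intro i
  rcases lt_trichotomy i (padicValNat p u) with hlt | heq | hgt
  · have : dig p (p ^ padicValNat p u) i = 0 := by
      unfold dig
      rw [show p ^ padicValNat p u = p ^ i * p ^ (padicValNat p u - i) by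
          rw [← pow_add]; congr 1; omega,
        Nat.mul_div_cancel_left _ (Nat.pow_pos (n := i) (by omega))]
      exact Nat.mod_eq_zero_of_dvd (dvd_pow_self p (by omega))
    omega
  · rw [heq]
    have h1 : dig p (p ^ padicValNat p u) (padicValNat p u) = 1 := by
      unfold dig
      rw [Nat.div_self (Nat.pow_pos (n := _) (by omega))]
      exact Nat.mod_eq_of_lt (by omega)
    have h2 : dig p u (padicValNat p u) ≠ 0 := by
      intro h0
      apply hd2
      have hdp : p ∣ u / p ^ padicValNat p u := Nat.dvd_of_mod_eq_zero h0
      obtain ⟨c, hc⟩ := hdp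
      have he : u = p ^ padicValNat p u * (u / p ^ padicValNat p u) :=
        (Nat.mul_div_cancel' hd1).symm
      refine ⟨c, ?_⟩
      rw [pow_succ]
      calc u = p ^ padicValNat p u * (u / p ^ padicValNat p u) := he
        _ = p ^ padicValNat p u * (p * c) := by rw [hc]
        _ = p ^ padicValNat p u * p * c := by ring
    omega
  · have : dig p (p ^ padicValNat p u) i = 0 := by
      unfold dig
      rw [Nat.div_eq_of_lt (Nat.pow_lt_pow_right (by omega) hgt)]
      simp
    omega

end
end WrAux

open Classical in
theorem stmt_12 (p n : ℕ) (hp : p.Prime) (hn : 1 ≤ n) (h : ℕ)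
    (hh1 : 2 ≤ h) (hh2 : 2 * h < p ^ n + 2)
    (m k : ℕ) (hm : m = h - 1) (hk : k = p ^ n - m)
    (d w : ℕ → ℤ)
    (hd : ∀ s, d s = if m ≤ s then 1 else 0)
    (hw : ∀ s, w s = if k ≤ s then 1 else 0) :
    (((Finset.range (p ^ n)).filter (fun u =>
        ∀ s, s < p ^ n → s ≠ 0 → preceq p s u → d u > d (u - s) + w s)).card : ℤ)
      = 2 + alphaCount p n m - betaCount p n m := by
  haveI : Fact p.Prime := ⟨hp⟩
  have hp2 : 2 ≤ p := hp.two_le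
  have hm1 : 1 ≤ m := by omega
  have h2m : 2 * m < p ^ n := by omega
  have hmk : m < k := by omega
  have hkpn : k ≤ p ^ n := by omega
  have hvn : padicValNat p m < n := WrAux.v_lt_n hp hm1 h2m
  have hbb : padicValNat p m + betaCount p n m < n := WrAux.beta_bound hp hn hm1 h2m
  have hseteq : (Finset.range (p ^ n)).filter (fun u =>
        ∀ s, s < p ^ n → s ≠ 0 → preceq p s u → d u > d (u - s) + w s)
      = insert 0 (((Finset.range (n - betaCount p n m)).filter
          (fun t => dig p (m - 1) t ≠ p - 1)).image (WrAux.Uc p m)) := by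
    ext u
    simp only [Finset.mem_filter, Finset.mem_range, Finset.mem_insert, Finset.mem_image]
    constructor
    · rintro ⟨hur, hcond⟩
      by_cases hu0 : u = 0
      · exact Or.inl hu0
      right
      have hu0' : 0 < u := Nat.pos_of_ne_zero hu0
      have h1 := hcond u hur hu0 (fun i => le_rfl)
      rw [hd u, hd (u - u), hw u, Nat.sub_self] at h1
      have hmu : m ≤ u ∧ u < k := by split_ifs at h1 <;> omega
      have hptd : p ^ padicValNat p u ∣ u := pow_padicValNat_dvd
      have hptnd : ¬ p ^ (padicValNat p u + 1) ∣ u := pow_succ_padicValNat_not_dvd hu0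
      have hptu : p ^ padicValNat p u ≤ u := Nat.le_of_dvd hu0' hptd
      have hpt0 : 0 < p ^ padicValNat p u := Nat.pow_pos (n := _) (by omega)
      have h2 := hcond (p ^ padicValNat p u) (by omega) (by omega)
        (WrAux.preceq_pow hp hu0)
      rw [hd u, hd (u - p ^ padicValNat p u), hw (p ^ padicValNat p u)] at h2
      have hups : u - p ^ padicValNat p u < m := by split_ifs at h2 <;> omega
      have hueq : u = WrAux.Uc p m (padicValNat p u) :=
        WrAux.Uc_unique hp2 hm1 hptd hmu.1 (by omega)
      have htn : padicValNat p u ≤ n := by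
        by_contra hc
        push_neg at hc
        have : p ^ n ≤ p ^ padicValNat p u := Nat.pow_le_pow_right (by omega) (by omega)
        omega
      have htN : padicValNat p u < n - betaCount p n m := by
        apply (WrAux.Uc_lt_k_iff hp hn hm1 h2m htn).mp
        rw [← hueq]
        omega
      have hdig : dig p (m - 1) (padicValNat p u) ≠ p - 1 := by
        intro hd'
        have hcon := (WrAux.Uc_succ_dvd_iff hp2 hm1).mpr hd'
        rw [← hueq] at hcon
        exact hptnd hcon
      exact ⟨padicValNat p u, ⟨htN, hdig⟩, hueq.symm⟩
    · rintro (rfl | ⟨t, ⟨htN, hdig⟩, rfl⟩)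
      · refine ⟨Nat.pow_pos (n := _) (by omega), ?_⟩
        intro s hs hs0 hpre
        have := WrAux.preceq_le hp2 s 0 hpre
        omega
      · have htn : t ≤ n := by omega
        have huk : WrAux.Uc p m t < k := by
          rw [hk]
          exact (WrAux.Uc_lt_k_iff hp hn hm1 h2m htn).mpr htN
        have hum : m ≤ WrAux.Uc p m t := WrAux.Uc_ge hp2 hm1
        have hUlt : WrAux.Uc p m t < m + p ^ t := WrAux.Uc_lt hp2 hm1
        refine ⟨by omega, ?_⟩
        intro s hs hs0 hpre
        have hsd : p ^ t ∣ s := by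
          apply WrAux.dvd_of_dig_eq_zero hp2
          intro i hi
          have h1 := hpre i
          have h2 := WrAux.dig_eq_zero_of_dvd hp2 (WrAux.Uc_dvd (p := p) (m := m) (t := t)) hi
          omega
        have hsl : p ^ t ≤ s := Nat.le_of_dvd (by omega) hsd
        have hsu : s ≤ WrAux.Uc p m t := WrAux.preceq_le hp2 s _ hpre
        rw [hd, hd, hw]
        split_ifs <;> omega
  rw [hseteq, Finset.card_insert_of_notMem ?h0nm, Finset.card_image_of_injOn ?hinj]
  case h0nm =>
    simp only [Finset.mem_image, Finset.mem_filter, Finset.mem_range, not_exists]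
    rintro t ⟨⟨-, -⟩, h0⟩
    have := WrAux.Uc_ge (p := p) (m := m) (t := t) hp2 hm1
    omega
  case hinj =>
    intro a ha b hb hab
    simp only [Finset.coe_filter, Finset.mem_range, Set.mem_setOf_eq] at ha hb
    by_contra hne
    rcases Nat.lt_or_ge a b with hlt | hge
    · apply ha.2
      apply (WrAux.Uc_succ_dvd_iff hp2 hm1).mp
      rw [hab]
      exact dvd_trans (pow_dvd_pow p (by omega)) WrAux.Uc_dvd
    · apply hb.2
      apply (WrAux.Uc_succ_dvd_iff hp2 hm1).mp
      rw [← hab]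
      exact dvd_trans (pow_dvd_pow p (by omega)) WrAux.Uc_dvd
  -- now a pure counting statement
  have hsplit1 : Finset.range (n - betaCount p n m)
      = Finset.range (padicValNat p m + 1) ∪ Finset.Ico (padicValNat p m + 1) (n - betaCount p n m) := by
    rw [Finset.range_eq_Ico, Finset.range_eq_Ico,
      Finset.Ico_union_Ico_eq_Ico (by omega) (by omega)]
  have hd1 : (Finset.range (padicValNat p m + 1)).filter (fun t => dig p (m - 1) t ≠ p - 1)
      = {padicValNat p m} := by
    ext t
    simp only [Finset.mem_filter, Finset.mem_range, Finset.mem_singleton]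
    constructor
    · rintro ⟨h1, h2⟩
      by_contra hne
      exact h2 (WrAux.dig_pred_of_lt hp hm1 (by omega))
    · rintro rfl
      exact ⟨by omega, WrAux.dig_pred_of_eq hp hm1⟩
  have hd2 : (Finset.Ico (padicValNat p m + 1) (n - betaCount p n m)).filter
        (fun t => dig p (m - 1) t ≠ p - 1)
      = (Finset.Ico (padicValNat p m + 1) (n - betaCount p n m)).filter
        (fun t => dig p m t ≠ p - 1) := by
    apply Finset.filter_congr
    intro t ht
    simp only [Finset.mem_Ico] at ht
    rw [WrAux.dig_pred_of_gt hp hm1 (by omega)]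
  have hAcard : ((Finset.range (n - betaCount p n m)).filter
        (fun t => dig p (m - 1) t ≠ p - 1)).card
      = 1 + ((Finset.Ico (padicValNat p m + 1) (n - betaCount p n m)).filter
        (fun t => dig p m t ≠ p - 1)).card := by
    rw [hsplit1, Finset.filter_union, Finset.card_union_of_disjoint, hd1, hd2,
      Finset.card_singleton]
    exact Finset.disjoint_filter_filter (by
      rw [Finset.range_eq_Ico]
      exact Finset.Ico_disjoint_Ico_consecutive 0 _ _)
  have hIoc : Finset.Ioc (padicValNat p m) (n - 1) = Finset.Ico (padicValNat p m + 1) n := by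
    ext j
    simp only [Finset.mem_Ioc, Finset.mem_Ico]
    omega
  have hsplit2 : Finset.Ico (padicValNat p m + 1) n
      = Finset.Ico (padicValNat p m + 1) (n - betaCount p n m) ∪
        Finset.Ico (n - betaCount p n m) n :=
    (Finset.Ico_union_Ico_eq_Ico (by omega) (by omega)).symm
  have htop : (Finset.Ico (n - betaCount p n m) n).filter (fun j => dig p m j ≠ p - 1)
      = Finset.Ico (n - betaCount p n m) n := by
    apply Finset.filter_true_of_mem
    intro j hj
    simp only [Finset.mem_Ico] at hj
    have hb1 : 1 ≤ betaCount p n m := by omega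
    obtain ⟨hp2', hdigs⟩ := WrAux.beta_digits hp hn hm1 h2m hb1
    have hp3 : 3 ≤ p := by
      have := hp.two_le
      omega
    have := hdigs j (by omega) (by omega)
    omega
  have halpha : alphaCount p n m
      = ((Finset.Ico (padicValNat p m + 1) (n - betaCount p n m)).filter
          (fun t => dig p m t ≠ p - 1)).card + betaCount p n m := by
    rw [alphaCount, hIoc, hsplit2, Finset.filter_union, Finset.card_union_of_disjoint, htop,
      Nat.card_Ico]
    · congr 1
      omega
    · exact Finset.disjoint_filter_filter (Finset.Ico_disjoint_Ico_consecutive _ _ _)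
  rw [hAcard, halpha]
  push_cast
  omega
end

section
/- Let p be prime and n ≥ 1. In the weakly ramified setting with u > k ≥ p^n/2 and j = v_p(u), one has: u belongs to the set 𝔇 (equivalently, d(u−s) = 0 for all 0 ≺ s ⪯ u, with d(t) = [t ≥ m], m < k) if and only if u − p^j < m; moreover u − p^j < m < u holds if and only if u = ⌈m/p^j⌉·p^j and v_p(m) < j. -/
lemma dig_zero_of_dvd {p u i j : ℕ} (hp : 0 < p) (hd : p ^ j ∣ u) (hij : i < j) :
    dig p u i = 0 := by
  obtain ⟨w, rfl⟩ := hd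
  have h1 : p ^ j = p ^ i * p ^ (j - i) := by rw [← pow_add]; congr 1; omega
  have h2 : p ^ (j - i) = p * p ^ (j - i - 1) := by
    rw [← pow_succ']; congr 1; omega
  unfold dig
  rw [h1, mul_assoc, Nat.mul_div_cancel_left _ (Nat.pow_pos (n := i) hp), h2,
    mul_assoc, Nat.mul_mod_right]

lemma pow_dvd_of_digs_zero {p s : ℕ} (hp : 1 < p) (j : ℕ)
    (h : ∀ i, i < j → dig p s i = 0) : p ^ j ∣ s := by
  induction j with
  | zero => simp
  | succ j ih =>
    obtain ⟨w, rfl⟩ := ih (fun i hi => h i (by omega))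
    have hd := h j (by omega)
    unfold dig at hd
    rw [Nat.mul_div_cancel_left _ (Nat.pow_pos (n := j) (by omega))] at hd
    obtain ⟨v, rfl⟩ := Nat.dvd_of_mod_eq_zero hd
    exact ⟨v, by ring⟩

theorem stmt_14 (p n : ℕ) (hp : p.Prime) (hn : 1 ≤ n)
    (m k u : ℕ) (hm : 0 < m) (hmk : m < k) (hk : p ^ n ≤ 2 * k)
    (hku : k < u) (hu : u < p ^ n)
    (j : ℕ) (hj : j = padicValNat p u) :
    ((∀ s, s < p ^ n → s ≠ 0 → preceq p s u → u - s < m) ↔ u - p ^ j < m) ∧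
    ((u - p ^ j < m ∧ m < u) ↔
      (u = p ^ j * ((m + p ^ j - 1) / p ^ j) ∧ padicValNat p m < j)) := by
  haveI : Fact p.Prime := ⟨hp⟩
  have hp1 : 1 < p := hp.one_lt
  have hu0 : u ≠ 0 := by omega
  have hdvd : p ^ j ∣ u := hj ▸ pow_padicValNat_dvd
  have hq : 0 < p ^ j := Nat.pow_pos (n := j) (by omega)
  have hqu : p ^ j ≤ u := Nat.le_of_dvd (by omega) hdvd
  have hndvd : ¬ p ^ (j + 1) ∣ u := by
    rw [padicValNat_dvd_iff_le hu0]; omega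
  -- u / p^j is not divisible by p
  obtain ⟨w, hw⟩ := hdvd
  have hwp : ¬ p ∣ w := by
    intro ⟨v, hv⟩
    exact hndvd ⟨v, by rw [hw, hv]; ring⟩
  have hdiguj : 1 ≤ dig p u j := by
    unfold dig
    rw [hw, Nat.mul_div_cancel_left _ hq]
    have : w % p ≠ 0 := fun h => hwp (Nat.dvd_of_mod_eq_zero h)
    omega
  have hmu : m < u := hmk.trans hku
  constructor
  · constructor
    · intro h
      refine h (p ^ j) (by omega) (by omega) ?_
      intro i
      rcases lt_trichotomy i j with hij | rfl | hij
      · have : dig p (p ^ j) i = 0 := dig_zero_of_dvd (by omega) dvd_rfl hij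
        omega
      · unfold dig
        rwa [Nat.div_self hq, Nat.one_mod_eq_one.mpr (by omega)]
      · have : p ^ j < p ^ i := Nat.pow_lt_pow_right hp1 hij
        unfold dig
        rw [Nat.div_eq_of_lt this]
        simp
    · intro h s _ hs0 hsu
      have hds : ∀ i, i < j → dig p s i = 0 := by
        intro i hi
        have := hsu i
        have := dig_zero_of_dvd (show 0 < p by omega) ⟨w, hw⟩ hi
        omega
      have hds' : p ^ j ∣ s := pow_dvd_of_digs_zero hp1 j hds
      have : p ^ j ≤ s := Nat.le_of_dvd (by omega) hds'
      omega
  · have hiff : ¬ p ^ j ∣ m ↔ padicValNat p m < j := by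
      rw [padicValNat_dvd_iff_le (by omega)]; omega
    constructor
    · rintro ⟨h1, h2⟩
      have hnm : ¬ p ^ j ∣ m := by
        intro hdm
        have : p ^ j ∣ u - m := Nat.dvd_sub ⟨w, hw⟩ hdm
        have := Nat.le_of_dvd (by omega) this
        omega
      refine ⟨?_, hiff.mp hnm⟩
      have hr := Nat.div_add_mod m (p ^ j)
      set q := p ^ j
      set a := m / q
      set r := m % q
      have hr0 : r ≠ 0 := fun h => hnm (Nat.dvd_of_mod_eq_zero h)
      have hrq : r < q := Nat.mod_lt m hq
      -- ceil: (m + q - 1)/q = a + 1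
      have hceil : (m + q - 1) / q = a + 1 := by
        have hqa : q * (a + 1) = q * a + q := by ring
        have h3 : m + q - 1 = q * (a + 1) + (r - 1) := by omega
        rw [h3, Nat.mul_add_div hq, Nat.div_eq_of_lt (by omega)]
      rw [hceil]
      -- u = q * (a + 1)
      have hwa : a < w := by
        have : q * a < q * w := by omega
        exact Nat.lt_of_mul_lt_mul_left this
      have hwa2 : w < a + 2 := by
        have : q * w < q * (a + 2) := by
          have : q * (a + 2) = q * a + q + q := by ring
          omega
        exact Nat.lt_of_mul_lt_mul_left this
      have : w = a + 1 := by omega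
      rw [hw, this]
    · rintro ⟨he, hv⟩
      have hnm : ¬ p ^ j ∣ m := hiff.mpr hv
      have hr := Nat.div_add_mod m (p ^ j)
      set q := p ^ j
      set a := m / q
      set r := m % q
      have hr0 : r ≠ 0 := fun h => hnm (Nat.dvd_of_mod_eq_zero h)
      have hrq : r < q := Nat.mod_lt m hq
      have hceil : (m + q - 1) / q = a + 1 := by
        have hqa : q * (a + 1) = q * a + q := by ring
        have h3 : m + q - 1 = q * (a + 1) + (r - 1) := by omega
        rw [h3, Nat.mul_add_div hq, Nat.div_eq_of_lt (by omega)]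
      rw [hceil] at he
      have : q * (a + 1) = q * a + q := by ring
      omega
end

section
/- Let p be prime, n ≥ 1, and a_1,...,a_n ∈ ℤ. Define 𝔟′ : {0,...,p−1}^n → ℤ by 𝔟′(x_1,...,x_n) = Σ a_i x_i. Then the composite (x ↦ 𝔟′(x) mod p^n) is a bijection from {0,...,p−1}^n onto ℤ/p^nℤ if and only if, after a permutation of the indices, v_p(a_i) = n − i for 1 ≤ i ≤ n. -/
lemma key_inj (p n : ℕ) (hp : p.Prime) (b d : Fin n → ℤ)
    (hb1 : ∀ j : Fin n, (p:ℤ)^(n-1-(j:ℕ)) ∣ b j)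
    (hb2 : ∀ j : Fin n, ¬ (p:ℤ)^(n-(j:ℕ)) ∣ b j)
    (hd : ∀ j, |d j| < p)
    (hdvd : (p:ℤ)^n ∣ ∑ j, b j * d j) :
    ∀ j, d j = 0 := by
  have hprime : Prime (p:ℤ) := Nat.prime_iff_prime_int.mp hp
  suffices H : ∀ m : ℕ, ∀ j : Fin n, n - m ≤ (j:ℕ) → d j = 0 by
    intro j; exact H n j (by omega)
  intro m
  induction m with
  | zero => intro j hj; exact absurd hj (by have := j.isLt; omega)
  | succ m ih =>
    intro j hj
    by_cases hc : n - m ≤ (j:ℕ)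
    · exact ih j hc
    · push_neg at hc
      have hsplit : (p:ℤ)^(n - (j:ℕ)) ∣ b j * d j := by
        have hA : (p:ℤ)^(n-(j:ℕ)) ∣ ∑ i, b i * d i :=
          dvd_trans (pow_dvd_pow _ (Nat.sub_le n _)) hdvd
        have hB : (p:ℤ)^(n-(j:ℕ)) ∣ ∑ i ∈ Finset.univ.erase j, b i * d i := by
          refine Finset.dvd_sum ?_
          intro i hi
          have hij : (i:ℕ) ≠ (j:ℕ) := fun hv => (Finset.ne_of_mem_erase hi) (Fin.ext hv)
          rcases lt_or_gt_of_ne hij with hlt | hgt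
          · exact Dvd.dvd.mul_right (dvd_trans (pow_dvd_pow _ (by omega)) (hb1 i)) _
          · have : d i = 0 := ih i (by omega)
            simp [this]
        have heq : b j * d j =
            (∑ i, b i * d i) - ∑ i ∈ Finset.univ.erase j, b i * d i := by
          rw [← Finset.add_sum_erase Finset.univ (fun i => b i * d i) (Finset.mem_univ j)]
          ring
        rw [heq]; exact dvd_sub hA hB
      obtain ⟨u, hu⟩ := hb1 j
      have hnq : n - (j:ℕ) = (n - 1 - (j:ℕ)) + 1 := by have := j.isLt; omega
      have h0 : ((p:ℤ)^(n-1-(j:ℕ)) : ℤ) ≠ 0 :=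
        pow_ne_zero _ (by exact_mod_cast hp.ne_zero)
      have hpd : (p:ℤ) ∣ u * d j := by
        rw [hnq, pow_succ, hu, mul_assoc] at hsplit
        exact (mul_dvd_mul_iff_left h0).mp hsplit
      rcases hprime.dvd_mul.mp hpd with h | h
      · exact absurd (by rw [hnq, pow_succ, hu]; exact mul_dvd_mul_left _ h) (hb2 j)
      · exact Int.eq_zero_of_abs_lt_dvd h (hd j)


lemma addchar_map_sum {A M : Type*} [AddCommMonoid A] [CommMonoid M] (ψ : AddChar A M)
    {ι : Type*} (s : Finset ι) (f : ι → A) : ψ (∑ i ∈ s, f i) = ∏ i ∈ s, ψ (f i) := by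
  classical
  induction s using Finset.induction with
  | empty => simp
  | insert _ _ h ih => rw [Finset.sum_insert h, Finset.prod_insert h, AddChar.map_add_eq_mul, ih]

lemma fwd_key (p n : ℕ) (hp : p.Prime) (a : Fin n → ℤ)
    (hB : Function.Bijective
      (fun x : Fin n → Fin p => (((∑ i, a i * (x i : ℤ)) : ℤ) : ZMod (p ^ n))))
    (k : ℕ) (hk1 : 1 ≤ k) (hk2 : k ≤ n) :
    ∃ i, (p:ℤ)^(k-1) ∣ a i ∧ ¬ (p:ℤ)^k ∣ a i := by
  haveI : NeZero (p^n) := ⟨pow_ne_zero _ hp.ne_zero⟩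
  have hN0 : (p^n : ℕ) ≠ 0 := pow_ne_zero _ hp.ne_zero
  set ζ : ℂ := Complex.exp (2 * Real.pi * Complex.I / (p^n : ℕ)) with hζdef
  have hζ : IsPrimitiveRoot ζ (p^n) := Complex.isPrimitiveRoot_exp _ hN0
  have h1 : (ζ ^ (p^(n-k))) ^ (p^n) = 1 := by
    rw [← pow_mul, mul_comm, pow_mul, hζ.pow_eq_one, one_pow]
  set ψ := AddChar.zmodChar (p^n) h1 with hψdef
  have hζk1 : ζ ^ (p^(n-k)) ≠ 1 := by
    intro h
    have h2 := (hζ.pow_eq_one_iff_dvd _).mp h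
    rw [Nat.pow_dvd_pow_iff_le_right hp.one_lt] at h2
    omega
  have hψ1 : ψ ≠ 1 := by
    intro h
    apply hζk1
    have hv1 : (1 : ZMod (p^n)).val = 1 :=
      ZMod.val_one_eq_one_mod (p^n) ▸ Nat.mod_eq_of_lt (Nat.one_lt_pow (by omega) hp.one_lt)
    have := AddChar.zmodChar_apply h1 (1 : ZMod (p^n))
    rw [hv1, pow_one, ← hψdef, h, AddChar.one_apply] at this
    exact this.symm
  have hsum0 : ∑ y : ZMod (p^n), ψ y = 0 := AddChar.sum_eq_zero_of_ne_one hψ1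
  have htrans : ∑ x : Fin n → Fin p, ψ (((∑ i, a i * (x i:ℤ)) : ℤ) : ZMod (p^n))
      = ∑ y : ZMod (p^n), ψ y :=
    Fintype.sum_bijective _ hB _ _ (fun x => rfl)
  have hexp : ∀ x : Fin n → Fin p,
      ψ (((∑ i, a i * (x i:ℤ)) : ℤ) : ZMod (p^n))
        = ∏ i, (ψ ((a i : ZMod (p^n))))^((x i : ℕ)) := by
    intro x
    have hcast : (((∑ i, a i * (x i:ℤ)) : ℤ) : ZMod (p^n))
        = ∑ i, ((x i : ℕ)) • ((a i : ℤ) : ZMod (p^n)) := by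
      push_cast
      refine Finset.sum_congr rfl fun i _ => ?_
      rw [nsmul_eq_mul]
      push_cast
      ring
    rw [hcast, addchar_map_sum]
    exact Finset.prod_congr rfl fun i _ => AddChar.map_nsmul_eq_pow ψ _ _
  have hprodzero : ∏ i, ∑ j : Fin p, (ψ ((a i : ZMod (p^n))))^((j : ℕ)) = 0 := by
    rw [Fintype.prod_sum]
    rw [← hsum0, ← htrans]
    exact Finset.sum_congr rfl fun x _ => (hexp x).symm
  obtain ⟨i, -, hi⟩ := Finset.prod_eq_zero_iff.mp hprodzero
  set τ : ℂ := ψ ((a i : ZMod (p^n))) with hτdef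
  set v : ℕ := ((a i : ℤ) : ZMod (p^n)).val with hvdef
  have hτ : τ = ζ ^ (p^(n-k) * v) := by
    rw [hτdef, hψdef, AddChar.zmodChar_apply, ← pow_mul]
  have hgeom : ∑ j ∈ Finset.range p, τ^j = 0 := by
    rw [← Fin.sum_univ_eq_sum_range]
    exact hi
  have hτp : τ ^ p = 1 := by
    have hgm := geom_sum_mul τ p
    rw [hgeom, zero_mul] at hgm
    exact sub_eq_zero.mp hgm.symm
  have hτ1 : τ ≠ 1 := by
    intro h
    rw [h] at hgeom
    simp only [one_pow, Finset.sum_const, Finset.card_range, nsmul_eq_mul, mul_one] at hgeom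
    exact hp.ne_zero (by exact_mod_cast hgeom)
  -- divisibility of v
  have hd1 : p^(k-1) ∣ v := by
    have h2 : ζ ^ (p^(n-k+1) * v) = 1 := by
      rw [hτ, ← pow_mul] at hτp
      rw [← hτp]
      congr 1
      rw [pow_succ]
      ring
    rw [hζ.pow_eq_one_iff_dvd] at h2
    have h3 : p^(n-k+1) * p^(k-1) ∣ p^(n-k+1) * v := by
      rw [← pow_add]
      have : n - k + 1 + (k - 1) = n := by omega
      rw [this]
      exact h2
    exact (Nat.mul_dvd_mul_iff_left (pow_pos hp.pos _)).mp h3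
  have hd2 : ¬ p^k ∣ v := by
    intro h
    apply hτ1
    obtain ⟨w, hw⟩ := h
    rw [hτ, hζ.pow_eq_one_iff_dvd, hw, ← mul_assoc, ← pow_add]
    have : n - k + k = n := by omega
    rw [this]
    exact Dvd.intro w rfl
  -- transfer to a i
  have hva : ((p:ℤ))^n ∣ a i - (v:ℤ) := by
    have hz : ((a i - (v:ℤ) : ℤ) : ZMod (p^n)) = 0 := by
      push_cast
      rw [hvdef, ZMod.natCast_val, ZMod.cast_id]
      ring
    rw [ZMod.intCast_zmod_eq_zero_iff_dvd] at hz
    exact_mod_cast hz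
  refine ⟨i, ?_, ?_⟩
  · have hvz : (p:ℤ)^(k-1) ∣ (v:ℤ) := by exact_mod_cast Int.natCast_dvd_natCast.mpr hd1
    have : a i = (a i - (v:ℤ)) + (v:ℤ) := by ring
    rw [this]
    exact dvd_add (dvd_trans (pow_dvd_pow _ (by omega)) hva) hvz
  · intro h
    apply hd2
    have hvz : (p:ℤ)^k ∣ (v:ℤ) := by
      have : (v:ℤ) = a i - (a i - (v:ℤ)) := by ring
      rw [this]
      exact dvd_sub h (dvd_trans (pow_dvd_pow _ hk2) hva)
    exact_mod_cast hvz



lemma back_dir (p n : ℕ) (hp : p.Prime) (a : Fin n → ℤ) (e : Equiv.Perm (Fin n))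
    (h1 : ∀ i : Fin n, (p:ℤ)^(n-1-(i:ℕ)) ∣ a (e i))
    (h2 : ∀ i : Fin n, ¬ (p:ℤ)^(n-(i:ℕ)) ∣ a (e i)) :
    Function.Bijective
      (fun x : Fin n → Fin p => (((∑ i, a i * (x i : ℤ)) : ℤ) : ZMod (p ^ n))) := by
  haveI : NeZero (p^n) := ⟨pow_ne_zero _ hp.ne_zero⟩
  rw [Fintype.bijective_iff_injective_and_card]
  constructor
  · intro x y hxy
    simp only at hxy
    set d : Fin n → ℤ := fun i => (x i : ℤ) - y i with hddef
    have hdvd : ((p:ℤ))^n ∣ ∑ i, a i * d i := by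
      have hz : ((∑ i, a i * (x i:ℤ) - ∑ i, a i * (y i:ℤ) : ℤ) : ZMod (p^n)) = 0 := by
        rw [Int.cast_sub, hxy, sub_self]
      rw [ZMod.intCast_zmod_eq_zero_iff_dvd] at hz
      have : (∑ i, a i * (x i:ℤ) - ∑ i, a i * (y i:ℤ)) = ∑ i, a i * d i := by
        rw [← Finset.sum_sub_distrib]
        exact Finset.sum_congr rfl fun i _ => by rw [hddef]; ring
      rw [this] at hz
      exact_mod_cast hz
    have hdvd' : (p:ℤ)^n ∣ ∑ j, a (e j) * d (e j) := by
      rwa [Equiv.sum_comp e (fun i => a i * d i)]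
    have hbound : ∀ j : Fin n, |d (e j)| < p := by
      intro j
      have hx : ((x (e j) : ℕ) : ℤ) < p := by exact_mod_cast (x (e j)).isLt
      have hy : ((y (e j) : ℕ) : ℤ) < p := by exact_mod_cast (y (e j)).isLt
      have hx0 : (0:ℤ) ≤ ((x (e j) : ℕ) : ℤ) := by positivity
      have hy0 : (0:ℤ) ≤ ((y (e j) : ℕ) : ℤ) := by positivity
      rw [hddef, abs_lt]
      constructor <;> push_cast <;> omega
    have hzero := key_inj p n hp (fun j => a (e j)) (fun j => d (e j)) h1 h2 hbound hdvd'
    funext i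
    have hz := hzero (e.symm i)
    simp only [Equiv.apply_symm_apply, hddef] at hz
    have : (x i : ℤ) = y i := by omega
    exact Fin.ext (by exact_mod_cast this)
  · simp [ZMod.card, Fintype.card_fun]


theorem stmt_17 (p n : ℕ) (hp : p.Prime) (hn : 1 ≤ n) (a : Fin n → ℤ) :
    Function.Bijective
      (fun x : Fin n → Fin p => (((∑ i, a i * (x i : ℤ)) : ℤ) : ZMod (p ^ n))) ↔
    ∃ e : Equiv.Perm (Fin n), ∀ i : Fin n,
      ((p : ℤ) ^ (n - 1 - (i : ℕ)) ∣ a (e i)) ∧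
      ¬ ((p : ℤ) ^ (n - (i : ℕ)) ∣ a (e i)) := by
  constructor
  · intro hB
    have H : ∀ k : Fin n, ∃ i, (p:ℤ)^((k:ℕ)) ∣ a i ∧ ¬ (p:ℤ)^((k:ℕ)+1) ∣ a i := by
      intro k
      have := fwd_key p n hp a hB ((k:ℕ)+1) (by omega) (by have := k.isLt; omega)
      simpa using this
    choose g hg1 hg2 using H
    have ginj : Function.Injective g := by
      intro k1 k2 he
      by_contra hne
      have hv : (k1:ℕ) ≠ (k2:ℕ) := fun h => hne (Fin.ext h)
      rcases lt_or_gt_of_ne hv with hlt | hgt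
      · exact hg2 k1 (by rw [he]; exact dvd_trans (pow_dvd_pow _ (by omega)) (hg1 k2))
      · exact hg2 k2 (by rw [← he]; exact dvd_trans (pow_dvd_pow _ (by omega)) (hg1 k1))
    have gbij : Function.Bijective g := Finite.injective_iff_bijective.mp ginj
    refine ⟨(Fin.revPerm).trans (Equiv.ofBijective g gbij), fun i => ?_⟩
    have hrev : ((Fin.rev i : Fin n) : ℕ) = n - 1 - (i:ℕ) := by
      rw [Fin.val_rev]
      omega
    have h1 := hg1 (Fin.rev i)
    have h2 := hg2 (Fin.rev i)
    rw [hrev] at h1 h2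
    have hni : n - (i:ℕ) = (n - 1 - (i:ℕ)) + 1 := by have := i.isLt; omega
    rw [hni]
    exact ⟨h1, by simpa using h2⟩
  · rintro ⟨e, he⟩
    exact back_dir p n hp a e (fun i => (he i).1) (fun i => (he i).2)
end
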